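/- arXiv:2507.18042 — 4 statements merged into one kernel-verified Lean document; each statement's English description precedes it below -/
import Mathlib

section
/- For integers $a \geq 1$, $b \geq 0$, $c \geq 0$ with $a \geq 2b+c$, define $\alpha(a,b,c) = \binom{a}{2b+c}_q [2b+c-1]_q!! \,\mathsf{H}(b,c)$ where $\binom{n}{k}_q$ is the $q$-binomial coefficient. Then $\alpha$ satisfies the four-term recurrence $\alpha(a,b,c) = q^{2b+c}\alpha(a-1,b,c) + [a-1]_q \alpha(a-2,b-1,c) + \alpha(a-1,b,c-1)$ whenever all arguments are valid (interpreting terms with negative arguments as zero). -/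
noncomputable section

def qint (q : ℝ) (n : ℕ) : ℝ := (1 - q ^ n) / (1 - q)

def qdfact (q : ℝ) : ℕ → ℝ
  | 0 => 1
  | 1 => 1
  | (n + 2) => qint q (n + 2) * qdfact q n

def qdfactZ (q : ℝ) (n : ℤ) : ℝ := if n < 0 then 1 else qdfact q n.toNat

def qfact (q : ℝ) : ℕ → ℝ
  | 0 => 1
  | (n + 1) => qint q (n + 1) * qfact q n

/-- Gaussian (q-)binomial coefficient, zero when `k > n`. -/
def qbinom (q : ℝ) (n k : ℕ) : ℝ :=
  if k ≤ n then qfact q n / (qfact q k * qfact q (n - k)) else 0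

open Classical in
def H (q : ℝ) (b c : ℕ) : ℝ :=
  ∑ f ∈ Finset.univ.filter (fun f : Fin c → Fin (b + 1) => Monotone f),
    ∏ k : Fin c,
      qdfactZ q (2 * (f k : ℤ) + (k : ℤ) - 1) / qdfactZ q (2 * (f k : ℤ) + (k : ℤ))

/-- `α(a,b,c) = \binom{a}{2b+c}_q [2b+c-1]_q!! H(b,c)`, extended by `0` to invalid
(negative, or `a < 2b+c`) argument triples. -/
def alphaZ (q : ℝ) (a b c : ℤ) : ℝ :=
  if 0 ≤ a ∧ 0 ≤ b ∧ 0 ≤ c ∧ 2 * b + c ≤ a then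
    qbinom q a.toNat (2 * b + c).toNat * qdfactZ q (2 * b + c - 1) * H q b.toNat c.toNat
  else 0

variable {q : ℝ}

lemma qint_pos (hq0 : 0 < q) (hq1 : q < 1) {n : ℕ} (hn : 0 < n) : 0 < qint q n := by
  have h1 : q ^ n < 1 := pow_lt_one₀ hq0.le hq1 hn.ne'
  have : (0:ℝ) < 1 - q := by linarith
  exact div_pos (by linarith) this

lemma qfact_pos (hq0 : 0 < q) (hq1 : q < 1) (n : ℕ) : 0 < qfact q n := by
  induction n with
  | zero => norm_num [qfact]
  | succ n ih => exact mul_pos (qint_pos hq0 hq1 n.succ_pos) ih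

lemma qdfact_pos (hq0 : 0 < q) (hq1 : q < 1) (n : ℕ) : 0 < qdfact q n := by
  induction n using Nat.strong_induction_on with
  | _ n ih =>
    match n with
    | 0 => norm_num [qdfact]
    | 1 => norm_num [qdfact]
    | (m+2) =>
      exact mul_pos (qint_pos hq0 hq1 (by omega)) (ih m (by omega))

lemma qdfactZ_pos (hq0 : 0 < q) (hq1 : q < 1) (n : ℤ) : 0 < qdfactZ q n := by
  unfold qdfactZ
  split
  · norm_num
  · exact qdfact_pos hq0 hq1 _

lemma qint_one (hq1 : q < 1) : qint q 1 = 1 := by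
  simp [qint]
  intro h; linarith

/-- key numerator identity: `[n+1] = q^(k+1) [n-k] + [k+1]` with `n = k+1+d`. -/
lemma qint_split (hq1 : q < 1) (k d : ℕ) :
    qint q (k + 1 + d + 1) = q ^ (k+1) * qint q (d + 1) + qint q (k + 1) := by
  have h : (1:ℝ) - q ≠ 0 := by linarith
  unfold qint
  field_simp
  ring

/-- q-Pascal rule. -/
lemma qbinom_pascal (hq0 : 0 < q) (hq1 : q < 1) (n k : ℕ) :
    qbinom q (n+1) (k+1) = q ^ (k+1) * qbinom q n (k+1) + qbinom q n k := by
  by_cases h : k + 1 ≤ n + 1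
  · rcases Nat.lt_or_ge k n with hk | hk
    · -- k + 1 ≤ n
      obtain ⟨d, rfl⟩ : ∃ d, n = k + 1 + d := ⟨n - k - 1, by omega⟩
      rw [qbinom, qbinom, qbinom, if_pos h, if_pos (by omega), if_pos (by omega)]
      have e1 : k + 1 + d + 1 - (k+1) = d + 1 := by omega
      have e2 : k + 1 + d - (k+1) = d := by omega
      have e3 : k + 1 + d - k = d + 1 := by omega
      rw [e1, e2, e3]
      have hfk := (qfact_pos hq0 hq1 k).ne'
      have hfk1 := (qfact_pos hq0 hq1 (k+1)).ne'
      have hfd := (qfact_pos hq0 hq1 d).ne'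
      have hfd1 := (qfact_pos hq0 hq1 (d+1)).ne'
      have hik1 := (qint_pos hq0 hq1 (k.succ_pos)).ne'
      have hid1 := (qint_pos hq0 hq1 (d.succ_pos)).ne'
      have hN : qfact q (k+1+d+1) = qint q (k+1+d+1) * qfact q (k+1+d) := rfl
      have hK : qfact q (k+1) = qint q (k+1) * qfact q k := rfl
      have hD : qfact q (d+1) = qint q (d+1) * qfact q d := rfl
      rw [hN, qint_split hq1 k d]
      rw [hK, hD]
      field_simp
    · -- k = n
      have : k = n := by omega
      subst this
      rw [qbinom, qbinom, qbinom, if_pos le_rfl, if_neg (by omega), if_pos le_rfl]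
      simp only [Nat.sub_self]
      have hfk := (qfact_pos hq0 hq1 k).ne'
      have hfk1 := (qfact_pos hq0 hq1 (k+1)).ne'
      rw [show qfact q 0 = 1 from rfl]
      field_simp
      ring
  · rw [qbinom, qbinom, qbinom, if_neg h, if_neg (by omega), if_neg (by omega)]
    ring

/-- absorption: `[k+1] C(n+1,k+1) = [n+1] C(n,k)`. -/
lemma qbinom_absorb (hq0 : 0 < q) (hq1 : q < 1) {n k : ℕ} (hk : k ≤ n) :
    qint q (k+1) * qbinom q (n+1) (k+1) = qint q (n+1) * qbinom q n k := by
  rw [qbinom, qbinom, if_pos (by omega), if_pos hk]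
  have e1 : n + 1 - (k+1) = n - k := by omega
  rw [e1]
  have hfk := (qfact_pos hq0 hq1 k).ne'
  have hfk1 := (qfact_pos hq0 hq1 (k+1)).ne'
  have hfnk := (qfact_pos hq0 hq1 (n-k)).ne'
  have hik1 := (qint_pos hq0 hq1 (k.succ_pos)).ne'
  have hin1 := (qint_pos hq0 hq1 (n.succ_pos)).ne'
  have hN : qfact q (n+1) = qint q (n+1) * qfact q n := rfl
  have hK : qfact q (k+1) = qint q (k+1) * qfact q k := rfl
  rw [hN, hK]
  field_simp

lemma qbinom_zero (hq0 : 0 < q) (hq1 : q < 1) (n : ℕ) : qbinom q n 0 = 1 := by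
  rw [qbinom, if_pos (Nat.zero_le n)]
  rw [show qfact q 0 = 1 from rfl, one_mul, Nat.sub_zero,
    div_self (qfact_pos hq0 hq1 n).ne']

lemma qdfactZ_step (hq1 : q < 1) (n : ℕ) :
    qdfactZ q ((n:ℤ) + 1) = qint q (n+1) * qdfactZ q ((n:ℤ) - 1) := by
  cases n with
  | zero =>
    unfold qdfactZ
    norm_num [qint_one hq1]
    rfl
  | succ m =>
    have h1 : ((m+1:ℕ):ℤ) + 1 = ((m+2:ℕ):ℤ) := by push_cast; ring
    have h2 : ((m+1:ℕ):ℤ) - 1 = ((m:ℕ):ℤ) := by push_cast; ring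
    rw [h1, h2]
    unfold qdfactZ
    rw [if_neg (by omega), if_neg (by omega),
      show ((m+2:ℕ):ℤ).toNat = m+2 by omega, show ((m:ℕ):ℤ).toNat = m by omega]
    rfl

lemma alphaZ_nat (q : ℝ) (a b c : ℕ) :
    alphaZ q a b c
      = qbinom q a (2*b+c) * qdfactZ q (2*(b:ℤ) + (c:ℤ) - 1) * H q b c := by
  unfold alphaZ
  by_cases h : 2*b+c ≤ a
  · rw [if_pos (by omega),
      show ((a:ℤ)).toNat = a by omega,
      show (2*(b:ℤ)+(c:ℤ)).toNat = 2*b+c by omega,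
      show ((b:ℤ)).toNat = b by omega, show ((c:ℤ)).toNat = c by omega]
  · rw [if_neg (by omega), qbinom, if_neg (by omega)]
    ring

lemma alphaZ_neg_b (q : ℝ) (a c : ℤ) : alphaZ q a (-1) c = 0 := by
  unfold alphaZ; rw [if_neg (by omega)]

lemma alphaZ_neg_c (q : ℝ) (a b : ℤ) : alphaZ q a b (-1) = 0 := by
  unfold alphaZ; rw [if_neg (by omega)]
lemma H_c_zero (q : ℝ) (b : ℕ) : H q b 0 = 1 := by
  classical
  unfold H
  have hall : ∀ f ∈ (Finset.univ : Finset (Fin 0 → Fin (b+1))), Monotone f :=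
    fun f _ i j _ => i.elim0
  rw [Finset.filter_true_of_mem hall]
  simp

lemma H_b_zero (q : ℝ) (c : ℕ) :
    H q 0 c = ∏ k : Fin c, (qdfactZ q ((k:ℤ) - 1) / qdfactZ q (k:ℤ)) := by
  classical
  unfold H
  have hall : ∀ f ∈ (Finset.univ : Finset (Fin c → Fin (0+1))), Monotone f :=
    fun f _ i j _ => by rw [Fin.le_def]; have := (f i).isLt; have := (f j).isLt; omega
  rw [Finset.filter_true_of_mem hall]
  rw [Finset.sum_congr rfl (fun f _ => Finset.prod_congr rfl (fun k _ => by
    have h0 : (f k).val = 0 := by have := (f k).isLt; omega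
    rw [show ((f k : ℕ) : ℤ) = 0 by exact_mod_cast h0]))]
  rw [Finset.sum_const]
  simp

lemma H_zero_succ (q : ℝ) (c : ℕ) :
    H q 0 (c+1) = (qdfactZ q ((c:ℤ) - 1) / qdfactZ q (c:ℤ)) * H q 0 c := by
  rw [H_b_zero, H_b_zero, Fin.prod_univ_castSucc]
  simp [mul_comm]

lemma H_rec (q : ℝ) (b c : ℕ) :
    H q (b+1) (c+1) = H q b (c+1)
      + (qdfactZ q (2*(b:ℤ)+c+1) / qdfactZ q (2*(b:ℤ)+c+2)) * H q (b+1) c := by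
  classical
  unfold H
  rw [← Finset.sum_filter_add_sum_filter_not
        (Finset.univ.filter (fun f : Fin (c+1) → Fin (b+2) => Monotone f))
        (fun f => ¬ f (Fin.last c) = Fin.last (b+1)),
      Finset.filter_filter, Finset.filter_filter]
  congr 1
  · -- the "< last" part equals H q b (c+1)
    refine Finset.sum_bij'
      (i := fun f hf => fun k => (⟨(f k).val, ?_⟩ : Fin (b+1)))
      (j := fun g hg => fun k => (g k).castSucc) ?_ ?_ ?_ ?_ ?_
    · -- (f k).val < b+1
      simp only [Finset.mem_filter] at hf
      obtain ⟨-, hmono, hne⟩ := hf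
      have h1 : f k ≤ f (Fin.last c) := hmono (Fin.le_last k)
      have h2 : (f (Fin.last c)).val ≠ b + 1 := fun h => hne (Fin.ext h)
      have := (f (Fin.last c)).isLt
      have := h1
      rw [Fin.le_def] at this
      omega
    · intro f hf
      simp only [Finset.mem_filter] at hf ⊢
      refine ⟨Finset.mem_univ _, fun x y hxy => ?_⟩
      simp only [Fin.mk_le_mk]
      exact hf.2.1 hxy
    · intro g hg
      simp only [Finset.mem_filter] at hg ⊢
      refine ⟨Finset.mem_univ _, fun x y hxy => ?_, fun h => ?_⟩
      · simp only [Fin.castSucc_le_castSucc_iff]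
        exact hg.2 hxy
      · have := congrArg Fin.val h
        simp only [Fin.coe_castSucc, Fin.val_last] at this
        have := (g (Fin.last c)).isLt
        omega
    · intro f hf; funext k; ext; simp
    · intro g hg; funext k; ext; simp
    · intro f hf
      apply Finset.prod_congr rfl
      intro k _
      rfl
  · -- the "= last" part
    rw [Finset.mul_sum]
    refine Finset.sum_bij'
      (i := fun f hf => f ∘ Fin.castSucc)
      (j := fun g hg => Fin.snoc g (Fin.last (b+1))) ?_ ?_ ?_ ?_ ?_
    · intro f hf
      simp only [Finset.mem_filter] at hf ⊢
      exact ⟨Finset.mem_univ _,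
        fun x y hxy => hf.2.1 (Fin.castSucc_le_castSucc_iff.mpr hxy)⟩
    · intro g hg
      simp only [Finset.mem_filter, not_not] at hg ⊢
      refine ⟨Finset.mem_univ _, fun x y hxy => ?_, by rw [Fin.snoc_last]⟩
      rcases eq_or_ne y (Fin.last c) with rfl | hy
      · rw [Fin.snoc_last]; exact Fin.le_last _
      · have hx : x ≠ Fin.last c := fun h => hy (le_antisymm (Fin.le_last y) (h ▸ hxy))
        rw [← Fin.castSucc_castPred y hy, ← Fin.castSucc_castPred x hx,
            Fin.snoc_castSucc, Fin.snoc_castSucc]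
        exact hg.2 (Fin.castPred_le_castPred_iff.mpr hxy)
    · intro f hf
      simp only [Finset.mem_filter, not_not] at hf
      funext k
      refine Fin.lastCases ?_ (fun j => ?_) k
      · simp only [Fin.snoc_last, hf.2.2]
      · simp only [Fin.snoc_castSucc, Function.comp_apply]
    · intro g hg
      funext k
      simp [Fin.snoc_castSucc]
    · intro f hf
      simp only [Finset.mem_filter, not_not] at hf
      rw [Fin.prod_univ_castSucc, hf.2.2]
      simp only [Fin.val_last, Fin.coe_castSucc, Function.comp]
      rw [mul_comm]
      congr 2 <;> push_cast <;> ring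

/-- The four-term recurrence
`α(a,b,c) = q^{2b+c} α(a-1,b,c) + [a-1]_q α(a-2,b-1,c) + α(a-1,b,c-1)`. -/
theorem alpha_recurrence (q : ℝ) (hq0 : 0 < q) (hq1 : q < 1)
    (a b c : ℕ) (ha : 1 ≤ a) (habc : 2 * b + c ≤ a) :
    alphaZ q a b c
      = q ^ (2 * b + c) * alphaZ q ((a : ℤ) - 1) b c
        + qint q (a - 1) * alphaZ q ((a : ℤ) - 2) ((b : ℤ) - 1) c
        + alphaZ q ((a : ℤ) - 1) b ((c : ℤ) - 1) := by
  obtain ⟨a', rfl⟩ : ∃ a', a = a' + 1 := ⟨a - 1, by omega⟩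
  rw [show ((a'+1:ℕ):ℤ) - 1 = ((a':ℕ):ℤ) by push_cast; ring]
  simp only [Nat.add_sub_cancel]
  rcases Nat.eq_zero_or_pos b with rfl | hb
  · rcases Nat.eq_zero_or_pos c with rfl | hc
    · -- b = 0, c = 0
      rw [show ((0:ℕ):ℤ) - 1 = (-1:ℤ) by norm_num, alphaZ_neg_b, alphaZ_neg_c,
        alphaZ_nat, alphaZ_nat, qbinom_zero hq0 hq1, qbinom_zero hq0 hq1]
      norm_num
    · -- b = 0, c ≥ 1
      obtain ⟨c', rfl⟩ : ∃ c', c = c' + 1 := ⟨c - 1, by omega⟩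
      rw [show ((0:ℕ):ℤ) - 1 = (-1:ℤ) by norm_num, alphaZ_neg_b,
        show ((c'+1:ℕ):ℤ) - 1 = ((c':ℕ):ℤ) by push_cast; ring,
        alphaZ_nat, alphaZ_nat, alphaZ_nat,
        show 2*0+(c'+1) = c'+1 by ring, show 2*0+c' = c' by ring,
        show 2*((0:ℕ):ℤ) + ((c'+1:ℕ):ℤ) - 1 = ((c':ℕ):ℤ) by push_cast; ring,
        show 2*((0:ℕ):ℤ) + ((c':ℕ):ℤ) - 1 = ((c':ℕ):ℤ) - 1 by push_cast; ring]
      have hP := qbinom_pascal hq0 hq1 a' c'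
      have hz := H_zero_succ q c'
      have hne := (qdfactZ_pos hq0 hq1 ((c':ℕ):ℤ)).ne'
      rw [hP, hz]
      field_simp
      ring
  · obtain ⟨b', rfl⟩ : ∃ b', b = b' + 1 := ⟨b - 1, by omega⟩
    rcases Nat.eq_zero_or_pos c with rfl | hc
    · -- b ≥ 1, c = 0
      obtain ⟨a2, rfl⟩ : ∃ t, a' = t + 1 := ⟨a' - 1, by omega⟩
      rw [show ((0:ℕ):ℤ) - 1 = (-1:ℤ) by norm_num, alphaZ_neg_c,
        show ((a2+2:ℕ):ℤ) - 2 = ((a2:ℕ):ℤ) by push_cast; ring,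
        show ((b'+1:ℕ):ℤ) - 1 = ((b':ℕ):ℤ) by push_cast; ring,
        alphaZ_nat, alphaZ_nat, alphaZ_nat,
        show 2*(b'+1)+0 = (2*b'+1)+1 by ring, show 2*b'+0 = 2*b' by ring,
        show 2*((b'+1:ℕ):ℤ) + ((0:ℕ):ℤ) - 1 = ((2*b'+1:ℕ):ℤ) by push_cast; ring,
        show 2*((b':ℕ):ℤ) + ((0:ℕ):ℤ) - 1 = ((2*b':ℕ):ℤ) - 1 by push_cast; ring,
        H_c_zero, H_c_zero]
      have hP := qbinom_pascal hq0 hq1 (a2+1) (2*b'+1)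
      have hA := qbinom_absorb hq0 hq1 (n := a2) (k := 2*b') (by omega)
      have hD := qdfactZ_step hq1 (2*b')
      rw [show ((2*b':ℕ):ℤ) + 1 = ((2*b'+1:ℕ):ℤ) by push_cast; ring] at hD
      linear_combination (qdfactZ q ((2*b'+1:ℕ):ℤ)) * hP
        + (qdfactZ q (((2*b':ℕ):ℤ) - 1)) * hA
        + (qbinom q (a2+1) (2*b'+1)) * hD
    · -- b ≥ 1, c ≥ 1
      obtain ⟨c'', rfl⟩ : ∃ t, c = t + 1 := ⟨c - 1, by omega⟩
      obtain ⟨a2, rfl⟩ : ∃ t, a' = t + 1 := ⟨a' - 1, by omega⟩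
      rw [show ((a2+2:ℕ):ℤ) - 2 = ((a2:ℕ):ℤ) by push_cast; ring,
        show ((b'+1:ℕ):ℤ) - 1 = ((b':ℕ):ℤ) by push_cast; ring,
        show ((c''+1:ℕ):ℤ) - 1 = ((c'':ℕ):ℤ) by push_cast; ring,
        alphaZ_nat, alphaZ_nat, alphaZ_nat, alphaZ_nat,
        show 2*(b'+1)+(c''+1) = (2*b'+c''+2)+1 by ring,
        show 2*b'+(c''+1) = 2*b'+c''+1 by ring,
        show 2*(b'+1)+c'' = 2*b'+c''+2 by ring,
        show 2*((b'+1:ℕ):ℤ) + ((c''+1:ℕ):ℤ) - 1 = 2*((b':ℕ):ℤ)+((c'':ℕ):ℤ)+2 by push_cast; ring,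
        show 2*((b':ℕ):ℤ) + ((c''+1:ℕ):ℤ) - 1 = 2*((b':ℕ):ℤ)+((c'':ℕ):ℤ) by push_cast; ring,
        show 2*((b'+1:ℕ):ℤ) + ((c'':ℕ):ℤ) - 1 = 2*((b':ℕ):ℤ)+((c'':ℕ):ℤ)+1 by push_cast; ring]
      have hP := qbinom_pascal hq0 hq1 (a2+1) (2*b'+c''+2)
      have hA := qbinom_absorb hq0 hq1 (n := a2) (k := 2*b'+c''+1) (by omega)
      have hD := qdfactZ_step hq1 (2*b'+c''+1)
      rw [show ((2*b'+c''+1:ℕ):ℤ) + 1 = 2*((b':ℕ):ℤ)+((c'':ℕ):ℤ)+2 by push_cast; ring,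
        show ((2*b'+c''+1:ℕ):ℤ) - 1 = 2*((b':ℕ):ℤ)+((c'':ℕ):ℤ) by push_cast; ring] at hD
      have hH := H_rec q b' c''
      have hne := (qdfactZ_pos hq0 hq1 (2*((b':ℕ):ℤ)+((c'':ℕ):ℤ)+2)).ne'
      have hH' : qdfactZ q (2*((b':ℕ):ℤ)+((c'':ℕ):ℤ)+2) * H q (b'+1) (c''+1)
          = qdfactZ q (2*((b':ℕ):ℤ)+((c'':ℤ))+2) * H q b' (c''+1)
            + qdfactZ q (2*((b':ℕ):ℤ)+((c'':ℕ):ℤ)+1) * H q (b'+1) c'' := by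
        rw [hH]
        field_simp
      rw [show 2*b'+c''+1+1 = 2*b'+c''+2 by ring] at hA
      linear_combination
        (qdfactZ q (2*((b':ℕ):ℤ)+((c'':ℕ):ℤ)+2) * H q (b'+1) (c''+1)) * hP
        + (qbinom q (a2+1) (2*b'+c''+2)) * hH'
        + (qbinom q (a2+1) (2*b'+c''+2) * H q b' (c''+1)) * hD
        + (qdfactZ q (2*((b':ℕ):ℤ)+((c'':ℕ):ℤ)) * H q b' (c''+1)) * hA
end
end

section
/- For every integer $n \geq 1$, $\sum_{0\le j_1\le j_2\le\cdots\le j_n\le 1} \prod_{r=1}^{n}\frac{(2j_r+r-2)!!}{(2j_r+r-1)!!} = \frac{1}{(n+1)!!}\sum_{m=0}^{n}(m+1) = \frac{(n+1)(n+2)}{2(n+1)!!}$, where the sum is over weakly increasing sequences $j_1 \le \cdots \le j_n$ with each $j_r \in \{0,1\}$. -/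
noncomputable section

/-- Ordinary double factorial extended to integers, with value `1` on negatives
(in particular `(-1)!! = 1`). -/
def dfactZ (n : ℤ) : ℝ := if n < 0 then 1 else (Nat.doubleFactorial n.toNat : ℝ)

namespace DfactAux

def e (k : ℕ) : ℝ := dfactZ ((k : ℤ) - 1)

lemma e_zero : e 0 = 1 := by simp [e, dfactZ]

lemma e_succ (k : ℕ) : e (k + 1) = (Nat.doubleFactorial k : ℝ) := by
  unfold e dfactZ
  rw [if_neg (by omega)]
  norm_num

lemma e_pos (k : ℕ) : 0 < e k := by
  unfold e dfactZ
  split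
  · norm_num
  · exact_mod_cast Nat.doubleFactorial_pos _

lemma e_step (t : ℕ) : e (t + 2) = ((t : ℝ) + 1) * e t := by
  cases t with
  | zero => simp [e_succ, e_zero, Nat.doubleFactorial]
  | succ s =>
    rw [e_succ, e_succ]
    rw [show s + 1 + 1 = s + 2 from rfl, Nat.doubleFactorial_add_two]
    push_cast
    ring

lemma tele (g : ℕ → ℝ) (hg : ∀ k, g k ≠ 0) (m : ℕ) :
    ∏ r ∈ Finset.range m, g r / g (r + 1) = g 0 / g m := by
  induction m with
  | zero => simp [div_self (hg 0)]
  | succ m ih =>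
    rw [Finset.prod_range_succ, ih]
    field_simp [hg]

/-- The monotone function with threshold `t`. -/
def F (n t : ℕ) : Fin n → Fin 2 := fun r => if (r : ℕ) < t then 0 else 1

lemma F_monotone (n t : ℕ) : Monotone (F n t) := by
  intro a b hab
  unfold F
  by_cases hb : (b : ℕ) < t
  · rw [if_pos (lt_of_le_of_lt (show (a : ℕ) ≤ b from hab) hb), if_pos hb]
  · rw [if_neg hb]
    split <;> decide

lemma dterm_zero (i : ℕ) :
    dfactZ (2 * (0 : ℤ) + (i : ℤ) - 1) / dfactZ (2 * (0 : ℤ) + (i : ℤ)) = e i / e (i + 1) := by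
  unfold e
  push_cast
  ring_nf

lemma dterm_one (i : ℕ) :
    dfactZ (2 * (1 : ℤ) + (i : ℤ) - 1) / dfactZ (2 * (1 : ℤ) + (i : ℤ)) = e (i + 2) / e (i + 3) := by
  unfold e
  push_cast
  ring_nf

lemma prod_F (n t : ℕ) (ht : t ≤ n) :
    (∏ r : Fin n, dfactZ (2 * ((F n t r : Fin 2) : ℤ) + (r : ℤ) - 1)
        / dfactZ (2 * ((F n t r : Fin 2) : ℤ) + (r : ℤ)))
      = ((t : ℝ) + 1) / (Nat.doubleFactorial (n + 1) : ℝ) := by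
  have hne : ∀ k, e k ≠ 0 := fun k => (e_pos k).ne'
  have hterm : ∀ r : Fin n,
      dfactZ (2 * ((F n t r : Fin 2) : ℤ) + (r : ℤ) - 1)
        / dfactZ (2 * ((F n t r : Fin 2) : ℤ) + (r : ℤ))
      = (fun i => if i < t then e i / e (i + 1) else e (i + 2) / e (i + 3)) (r : ℕ) := by
    intro r
    unfold F
    by_cases h : (r : ℕ) < t
    · simp only [h, if_true, if_pos h]
      exact dterm_zero _
    · simp only [h, if_false, if_neg h]
      exact dterm_one _
  rw [Finset.prod_congr rfl (fun r _ => hterm r)]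
  rw [Fin.prod_univ_eq_prod_range (fun i => if i < t then e i / e (i + 1) else e (i + 2) / e (i + 3)) n]
  rw [← Finset.prod_range_mul_prod_Ico _ ht]
  have h1 : ∏ i ∈ Finset.range t, (if i < t then e i / e (i + 1) else e (i + 2) / e (i + 3))
      = 1 / e t := by
    rw [Finset.prod_congr rfl (fun i hi => if_pos (Finset.mem_range.mp hi))]
    rw [tele e hne t, e_zero]
  have h2 : ∏ i ∈ Finset.Ico t n, (if i < t then e i / e (i + 1) else e (i + 2) / e (i + 3))
      = e (t + 2) / e (n + 2) := by
    rw [Finset.prod_congr rfl (fun i hi => if_neg (by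
      have := (Finset.mem_Ico.mp hi).1; omega))]
    rw [Finset.prod_Ico_eq_prod_range]
    have : ∀ i, e (t + i + 2) / e (t + i + 3) = (fun k => e (t + 2 + k)) i / (fun k => e (t + 2 + k)) (i + 1) := by
      intro i; simp only []; congr 2 <;> omega
    rw [Finset.prod_congr rfl (fun i _ => this i)]
    rw [tele (fun k => e (t + 2 + k)) (fun k => hne _) (n - t)]
    congr 2 <;> omega
  rw [h1, h2, e_step t, show n + 1 + 1 = n + 2 from rfl, ← e_succ (n + 1)]
  field_simp [hne]

lemma F_inj (n : ℕ) {t1 t2 : ℕ} (h1 : t1 ≤ n) (h2 : t2 ≤ n) (hF : F n t1 = F n t2) :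
    t1 = t2 := by
  by_contra hne
  rcases Nat.lt_or_ge t1 t2 with h | h
  · have hr : t1 < n := lt_of_lt_of_le h h2
    have := congrFun hF ⟨t1, hr⟩
    simp [F, h] at this
  · have h' : t2 < t1 := by omega
    have hr : t2 < n := lt_of_lt_of_le h' h1
    have := congrFun hF ⟨t2, hr⟩
    simp [F, h'] at this

lemma F_surj (n : ℕ) (f : Fin n → Fin 2) (hf : Monotone f) :
    ∃ t ≤ n, F n t = f := by
  classical
  set S : Finset (Fin n) := Finset.univ.filter (fun r => f r = 0) with hS
  refine ⟨S.card, ?_, ?_⟩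
  · calc S.card ≤ (Finset.univ : Finset (Fin n)).card := Finset.card_le_card (Finset.filter_subset _ _)
      _ = n := by simp
  · funext r
    unfold F
    by_cases h : f r = 0
    · rw [if_pos, h]
      have hsub : Finset.Iic r ⊆ S := by
        intro s hs
        simp only [hS, Finset.mem_filter, Finset.mem_univ, true_and]
        have : f s ≤ f r := hf (Finset.mem_Iic.mp hs)
        rw [h] at this
        exact Fin.le_zero_iff.mp this
      have := Finset.card_le_card hsub
      rw [Fin.card_Iic] at this
      omega
    · rw [if_neg, (by omega : f r = 1)]
      have hsub : S ⊆ Finset.Iio r := by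
        intro s hs
        simp only [hS, Finset.mem_filter, Finset.mem_univ, true_and] at hs
        rw [Finset.mem_Iio]
        by_contra hle
        have : f r ≤ f s := hf (le_of_not_gt hle)
        rw [hs] at this
        exact h (Fin.le_zero_iff.mp this)
      have := Finset.card_le_card hsub
      rw [Fin.card_Iio] at this
      omega

lemma gauss (n : ℕ) : (∑ m ∈ Finset.range (n + 1), ((m : ℝ) + 1))
    = ((n : ℝ) + 1) * ((n : ℝ) + 2) / 2 := by
  induction n with
  | zero => simp
  | succ k ih =>
    rw [Finset.sum_range_succ, ih]
    push_cast
    ring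

end DfactAux

open DfactAux in
open Classical in
/-- `∑_{0 ≤ j₁ ≤ ⋯ ≤ j_n ≤ 1} ∏_{r=1}^n (2 j_r + r - 2)!!/(2 j_r + r - 1)!!
  = (1/(n+1)!!) ∑_{m=0}^n (m+1) = (n+1)(n+2)/(2 (n+1)!!)`. -/
theorem sum_monotone_prod_dfact_le_one (n : ℕ) (hn : 1 ≤ n) :
    (∑ f ∈ Finset.univ.filter (fun f : Fin n → Fin 2 => Monotone f),
        ∏ r : Fin n, dfactZ (2 * (f r : ℤ) + (r : ℤ) - 1) / dfactZ (2 * (f r : ℤ) + (r : ℤ)))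
      = (∑ m ∈ Finset.range (n + 1), ((m : ℝ) + 1)) / (Nat.doubleFactorial (n + 1) : ℝ)
    ∧ (∑ f ∈ Finset.univ.filter (fun f : Fin n → Fin 2 => Monotone f),
        ∏ r : Fin n, dfactZ (2 * (f r : ℤ) + (r : ℤ) - 1) / dfactZ (2 * (f r : ℤ) + (r : ℤ)))
      = ((n : ℝ) + 1) * ((n : ℝ) + 2) / (2 * (Nat.doubleFactorial (n + 1) : ℝ)) := by
  have key : (∑ f ∈ Finset.univ.filter (fun f : Fin n → Fin 2 => Monotone f),
        ∏ r : Fin n, dfactZ (2 * (f r : ℤ) + (r : ℤ) - 1) / dfactZ (2 * (f r : ℤ) + (r : ℤ)))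
      = (∑ m ∈ Finset.range (n + 1), ((m : ℝ) + 1)) / (Nat.doubleFactorial (n + 1) : ℝ) := by
    rw [Finset.sum_div]
    symm
    refine Finset.sum_bij (fun t _ => F n t) ?_ ?_ ?_ ?_
    · intro t ht
      simp only [Finset.mem_filter, Finset.mem_univ, true_and]
      exact F_monotone n t
    · intro t1 h1 t2 h2 h
      exact F_inj n (by simpa using Nat.lt_succ_iff.mp (Finset.mem_range.mp h1))
        (Nat.lt_succ_iff.mp (Finset.mem_range.mp h2)) h
    · intro f hf
      obtain ⟨t, ht, hFt⟩ := F_surj n f (by simpa using hf)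
      exact ⟨t, Finset.mem_range.mpr (Nat.lt_succ_iff.mpr ht), hFt⟩
    · intro t ht
      rw [prod_F n t (Nat.lt_succ_iff.mp (Finset.mem_range.mp ht))]
  have hsum := DfactAux.gauss n
  refine ⟨key, ?_⟩
  rw [key, hsum]
  ring
end
end

section
/- For every integer $n \geq 1$, $\sum_{0\le j_1\le j_2\le\cdots\le j_n\le 2} \prod_{r=1}^{n}\frac{(2j_r+r-2)!!}{(2j_r+r-1)!!} = \frac{n^4+10n^3+35n^2+50n+24}{8\,(n+3)!!}$, where the sum is over weakly increasing sequences with each $j_r \in \{0,1,2\}$. -/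
noncomputable section

lemma dfactZ_pos (k : ℤ) : 0 < dfactZ k := by
  unfold dfactZ; split
  · exact one_pos
  · exact_mod_cast Nat.doubleFactorial_pos _

lemma dfactZ_ne_zero (k : ℤ) : dfactZ k ≠ 0 := (dfactZ_pos k).ne'

lemma dfactZ_step (m : ℤ) (hm : -1 ≤ m) : dfactZ (m + 2) = (m + 2) * dfactZ m := by
  rcases eq_or_lt_of_le hm with h | h
  · subst_eqs; norm_num [dfactZ]
  · have hm0 : 0 ≤ m := by omega
    obtain ⟨k, rfl⟩ := Int.eq_ofNat_of_zero_le hm0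
    have h2 : ((k:ℤ) + 2).toNat = k + 2 := by omega
    have h0 : ((k:ℤ)).toNat = k := by omega
    simp only [dfactZ, if_neg (by omega : ¬((k:ℤ)+2 < 0)), if_neg (by omega : ¬((k:ℤ) < 0)),
      h2, h0, Nat.doubleFactorial_add_two]
    push_cast; ring

lemma tele (c : ℤ) : ∀ t s : ℕ, s ≤ t →
    ∏ k ∈ Finset.Ico s t, dfactZ ((k:ℤ) + c) / dfactZ ((k:ℤ) + 1 + c)
      = dfactZ ((s:ℤ) + c) / dfactZ ((t:ℤ) + c) := by
  intro t
  induction t with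
  | zero => intro s hs; interval_cases s; simp [div_self (dfactZ_ne_zero _)]
  | succ t ih =>
    intro s hs
    rcases Nat.lt_or_ge s (t+1) with h | h
    · have hst : s ≤ t := by omega
      rw [Finset.prod_Ico_succ_top hst, ih s hst]
      have h1 : ((t:ℤ)+1+c) = ((t+1:ℕ):ℤ) + c := by push_cast; ring
      rw [h1]
      field_simp
      rw [mul_comm (dfactZ ((s:ℤ)+c)) (dfactZ ((t:ℤ)+c)), mul_div_mul_left _ _ (dfactZ_ne_zero _)]
    · have : s = t + 1 := by omega
      subst this; simp [div_self (dfactZ_ne_zero _)]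

/-- The monotone step function determined by cut points `a ≤ b`. -/
def gfun (n a b : ℕ) : Fin n → Fin 3 :=
  fun r => if (r:ℕ) < a then 0 else if (r:ℕ) < b then 1 else 2

lemma gfun_mono (n a b : ℕ) (hab : a ≤ b) : Monotone (gfun n a b) := by
  intro r s hrs
  have h : (r:ℕ) ≤ (s:ℕ) := hrs
  unfold gfun
  split_ifs <;> first | rfl | decide | omega

lemma mono_le_iff (n : ℕ) (f : Fin n → Fin 3) (hf : Monotone f) (k : Fin 3) (r : Fin n) :
    f r ≤ k ↔ (r:ℕ) < (Finset.univ.filter (fun s => f s ≤ k)).card := by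
  constructor
  · intro h
    have hsub : Finset.Iic r ⊆ Finset.univ.filter (fun s => f s ≤ k) := by
      intro s hs
      simp only [Finset.mem_Iic] at hs
      simp only [Finset.mem_filter, Finset.mem_univ, true_and]
      exact le_trans (hf hs) h
    have := Finset.card_le_card hsub
    rw [Fin.card_Iic] at this
    omega
  · intro h
    by_contra hc
    have hsub : Finset.univ.filter (fun s => f s ≤ k) ⊆ Finset.Iio r := by
      intro s hs
      simp only [Finset.mem_filter, Finset.mem_univ, true_and] at hs
      simp only [Finset.mem_Iio]
      by_contra hs2
      exact hc (le_trans (hf (le_of_not_gt hs2)) hs)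
    have := Finset.card_le_card hsub
    rw [Fin.card_Iio] at this
    omega

lemma card_filter_val_lt (n a : ℕ) (ha : a ≤ n) :
    (Finset.univ.filter (fun r : Fin n => (r:ℕ) < a)).card = a := by
  rcases Nat.lt_or_ge a n with h | h
  · have he : Finset.univ.filter (fun r : Fin n => (r:ℕ) < a) = Finset.Iio ⟨a, h⟩ := by
      ext r; simp [Fin.lt_def]
    rw [he, Fin.card_Iio]
  · have han : a = n := le_antisymm ha h
    have he : Finset.univ.filter (fun r : Fin n => (r:ℕ) < a) = Finset.univ := by
      ext r; simp; omega
    rw [he, Finset.card_univ, Fintype.card_fin, han]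

lemma mono_cards_le (n : ℕ) (f : Fin n → Fin 3) :
    (Finset.univ.filter (fun s => f s ≤ 0)).card ≤ (Finset.univ.filter (fun s => f s ≤ 1)).card ∧
      (Finset.univ.filter (fun s => f s ≤ 1)).card ≤ n := by
  constructor
  · apply Finset.card_le_card
    intro x hx
    simp only [Finset.mem_filter, Finset.mem_univ, true_and] at hx ⊢
    exact le_trans hx (by decide)
  · have := Finset.card_filter_le Finset.univ (fun s => f s ≤ 1)
    simpa using this

lemma gfun_cards_eq (n : ℕ) (f : Fin n → Fin 3) (hf : Monotone f) :
    gfun n (Finset.univ.filter (fun s => f s ≤ 0)).card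
        (Finset.univ.filter (fun s => f s ≤ 1)).card = f := by
  funext r
  have h0 := mono_le_iff n f hf 0 r
  have h1 := mono_le_iff n f hf 1 r
  simp only [gfun]
  split_ifs with ha hb
  · exact (le_antisymm (h0.mpr ha) (Fin.zero_le _)).symm
  · have hle1 : f r ≤ 1 := h1.mpr hb
    have hnle0 : ¬ f r ≤ 0 := fun hc => ha (h0.mp hc)
    have hv : (f r : ℕ) = 1 := by
      have := Fin.le_def.mp hle1
      have h2 : ¬ (f r : ℕ) ≤ 0 := fun hc => hnle0 (Fin.le_def.mpr (by simpa using hc))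
      omega
    exact (Fin.ext hv).symm
  · have hnle1 : ¬ f r ≤ 1 := fun hc => hb (h1.mp hc)
    have hv : (f r : ℕ) = 2 := by
      have h2 : ¬ (f r : ℕ) ≤ 1 := fun hc => hnle1 (Fin.le_def.mpr (by simpa using hc))
      have := (f r).isLt
      omega
    exact (Fin.ext hv).symm

/-- the term as a function of the index and cut points. -/
def hAux (a b : ℕ) (k : ℕ) : ℝ :=
  if k < a then dfactZ ((k:ℤ) - 1) / dfactZ (k:ℤ)
  else if k < b then dfactZ ((k:ℤ) + 1) / dfactZ ((k:ℤ) + 2)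
  else dfactZ ((k:ℤ) + 3) / dfactZ ((k:ℤ) + 4)

lemma prod_gfun (n a b : ℕ) (hab : a ≤ b) (hbn : b ≤ n) :
    (∏ r : Fin n, dfactZ (2 * (gfun n a b r : ℤ) + (r : ℤ) - 1) /
        dfactZ (2 * (gfun n a b r : ℤ) + (r : ℤ)))
      = ((a:ℝ) + 1) * ((b:ℝ) + 3) / dfactZ ((n:ℤ) + 3) := by
  have hterm : ∀ r : Fin n,
      dfactZ (2 * (gfun n a b r : ℤ) + (r : ℤ) - 1) /
        dfactZ (2 * (gfun n a b r : ℤ) + (r : ℤ)) = hAux a b (r:ℕ) := by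
    intro r
    unfold gfun hAux
    split_ifs <;> norm_num <;> ring_nf
  rw [Finset.prod_congr rfl (fun r _ => hterm r), Fin.prod_univ_eq_prod_range (fun k => hAux a b k) n]
  rw [Finset.range_eq_Ico,
    ← Finset.prod_Ico_consecutive (hAux a b) (Nat.zero_le a) (hab.trans hbn),
    ← Finset.prod_Ico_consecutive (hAux a b) hab hbn]
  have p1 : ∏ k ∈ Finset.Ico 0 a, hAux a b k
      = ∏ k ∈ Finset.Ico 0 a, dfactZ ((k:ℤ) + (-1)) / dfactZ ((k:ℤ) + 1 + (-1)) := by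
    refine Finset.prod_congr rfl fun k hk => ?_
    simp only [Finset.mem_Ico] at hk
    unfold hAux
    rw [if_pos hk.2]
    ring_nf
  have p2 : ∏ k ∈ Finset.Ico a b, hAux a b k
      = ∏ k ∈ Finset.Ico a b, dfactZ ((k:ℤ) + 1) / dfactZ ((k:ℤ) + 1 + 1) := by
    refine Finset.prod_congr rfl fun k hk => ?_
    simp only [Finset.mem_Ico] at hk
    unfold hAux
    rw [if_neg (by omega), if_pos hk.2]
    ring_nf
  have p3 : ∏ k ∈ Finset.Ico b n, hAux a b k
      = ∏ k ∈ Finset.Ico b n, dfactZ ((k:ℤ) + 3) / dfactZ ((k:ℤ) + 1 + 3) := by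
    refine Finset.prod_congr rfl fun k hk => ?_
    simp only [Finset.mem_Ico] at hk
    unfold hAux
    rw [if_neg (by omega), if_neg (by omega)]
    ring_nf
  rw [p1, p2, p3, tele (-1) a 0 (Nat.zero_le a), tele 1 b a hab, tele 3 n b hbn]
  have e1 : ((0:ℕ):ℤ) + (-1) = -1 := by norm_num
  have e2 : dfactZ (-1) = 1 := by norm_num [dfactZ]
  have s1 : dfactZ ((a:ℤ) + 1) = ((a:ℝ) + 1) * dfactZ ((a:ℤ) + (-1)) := by
    have := dfactZ_step ((a:ℤ) - 1) (by omega)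
    have harg : (a:ℤ) - 1 + 2 = (a:ℤ) + 1 := by ring
    rw [harg] at this
    rw [this]
    have : (a:ℤ) - 1 = (a:ℤ) + (-1) := by ring
    rw [this]
    push_cast
    ring
  have s2 : dfactZ ((b:ℤ) + 3) = ((b:ℝ) + 3) * dfactZ ((b:ℤ) + 1) := by
    have := dfactZ_step ((b:ℤ) + 1) (by omega)
    have harg : (b:ℤ) + 1 + 2 = (b:ℤ) + 3 := by ring
    rw [harg] at this
    rw [this]
    push_cast
    ring
  rw [e1, e2, s1, s2]
  have h1 := dfactZ_ne_zero ((a:ℤ) + (-1))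
  have h2 := dfactZ_ne_zero ((b:ℤ) + 1)
  have h3 := dfactZ_ne_zero ((n:ℤ) + 3)
  field_simp

lemma gauss1 (m : ℕ) : ∑ a ∈ Finset.range m, ((a:ℝ) + 1) = m * (m + 1) / 2 := by
  induction m with
  | zero => simp
  | succ m ih => rw [Finset.sum_range_succ, ih]; push_cast; ring

lemma gauss2 (m : ℕ) : ∑ b ∈ Finset.range m, ((b:ℝ) + 1) * ((b:ℝ) + 2) * ((b:ℝ) + 3)
    = m * (m + 1) * (m + 2) * (m + 3) / 4 := by
  induction m with
  | zero => simp
  | succ m ih => rw [Finset.sum_range_succ, ih]; push_cast; ring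

open Classical in
/-- `∑_{0 ≤ j₁ ≤ ⋯ ≤ j_n ≤ 2} ∏_{r=1}^n (2 j_r + r - 2)!!/(2 j_r + r - 1)!!
  = (n⁴ + 10n³ + 35n² + 50n + 24)/(8 (n+3)!!)`. -/
theorem sum_monotone_prod_dfact_le_two (n : ℕ) (hn : 1 ≤ n) :
    (∑ f ∈ Finset.univ.filter (fun f : Fin n → Fin 3 => Monotone f),
        ∏ r : Fin n, dfactZ (2 * (f r : ℤ) + (r : ℤ) - 1) / dfactZ (2 * (f r : ℤ) + (r : ℤ)))
      = ((n : ℝ) ^ 4 + 10 * (n : ℝ) ^ 3 + 35 * (n : ℝ) ^ 2 + 50 * (n : ℝ) + 24)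
          / (8 * (Nat.doubleFactorial (n + 3) : ℝ)) := by
  classical
  set t : Finset ((_ : ℕ) × ℕ) := (Finset.range (n+1)).sigma (fun b => Finset.range (b+1)) with ht
  have key : (∑ f ∈ Finset.univ.filter (fun f : Fin n → Fin 3 => Monotone f),
        ∏ r : Fin n, dfactZ (2 * (f r : ℤ) + (r : ℤ) - 1) / dfactZ (2 * (f r : ℤ) + (r : ℤ)))
      = ∑ p ∈ t, ((p.2:ℝ) + 1) * ((p.1:ℝ) + 3) / dfactZ ((n:ℤ) + 3) := by
    refine Finset.sum_nbij'
      (i := fun f => (⟨(Finset.univ.filter (fun s => f s ≤ 1)).card,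
                       (Finset.univ.filter (fun s => f s ≤ 0)).card⟩ : (_ : ℕ) × ℕ))
      (j := fun p => gfun n p.2 p.1) ?_ ?_ ?_ ?_ ?_
    · intro f hf
      simp only [Finset.mem_filter, Finset.mem_univ, true_and] at hf
      simp only [ht, Finset.mem_sigma, Finset.mem_range]
      constructor
      · have := Finset.card_filter_le Finset.univ (fun s => f s ≤ 1)
        simp only [Finset.card_univ, Fintype.card_fin] at this
        omega
      · have := (mono_cards_le n f).1
        omega
    · intro p hp
      simp only [ht, Finset.mem_sigma, Finset.mem_range] at hp
      simp only [Finset.mem_filter, Finset.mem_univ, true_and]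
      exact gfun_mono n p.2 p.1 (by omega)
    · -- left inverse : gfun of cards = f
      intro f hf
      simp only [Finset.mem_filter, Finset.mem_univ, true_and] at hf
      exact gfun_cards_eq n f hf
    · -- right inverse
      rintro ⟨b, a⟩ hp
      simp only [ht, Finset.mem_sigma, Finset.mem_range] at hp
      have hab : a ≤ b := by omega
      have hbn : b ≤ n := by omega
      have c0 : Finset.univ.filter (fun s => gfun n a b s ≤ 0)
          = Finset.univ.filter (fun r : Fin n => (r:ℕ) < a) := by
        apply Finset.filter_congr
        intro r _
        simp only [gfun]
        split_ifs with h1 h2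
        · exact iff_of_true (by decide) h1
        · exact iff_of_false (by decide) h1
        · exact iff_of_false (by decide) h1
      have c1 : Finset.univ.filter (fun s => gfun n a b s ≤ 1)
          = Finset.univ.filter (fun r : Fin n => (r:ℕ) < b) := by
        apply Finset.filter_congr
        intro r _
        simp only [gfun]
        split_ifs with h1 h2
        · exact iff_of_true (by decide) (by omega)
        · exact iff_of_true (by decide) h2
        · exact iff_of_false (by decide) h2
      show (⟨(Finset.univ.filter (fun s => gfun n a b s ≤ 1)).card,
        (Finset.univ.filter (fun s => gfun n a b s ≤ 0)).card⟩ : (_ : ℕ) × ℕ) = ⟨b, a⟩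
      rw [c0, c1, card_filter_val_lt n b hbn, card_filter_val_lt n a (hab.trans hbn)]
    · -- values
      intro f hf
      simp only [Finset.mem_filter, Finset.mem_univ, true_and] at hf
      have hle := mono_cards_le n f
      conv_lhs => rw [← gfun_cards_eq n f hf]
      exact prod_gfun n _ _ hle.1 hle.2
  rw [key, ht, Finset.sum_sigma]
  have hD : dfactZ ((n:ℤ) + 3) = (Nat.doubleFactorial (n + 3) : ℝ) := by
    unfold dfactZ
    rw [if_neg (by omega)]
    congr 1 <;> omega
  have hDpos : (0:ℝ) < (Nat.doubleFactorial (n + 3) : ℝ) := by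
    exact_mod_cast Nat.doubleFactorial_pos _
  have inner : ∀ b : ℕ, ∑ a ∈ Finset.range (b+1), ((a:ℝ) + 1) * ((b:ℝ) + 3) / dfactZ ((n:ℤ) + 3)
      = ((b:ℝ)+1) * ((b:ℝ)+2) * ((b:ℝ)+3) / (2 * dfactZ ((n:ℤ) + 3)) := by
    intro b
    rw [← Finset.sum_div, ← Finset.sum_mul, gauss1 (b+1)]
    push_cast
    field_simp
    ring
  rw [Finset.sum_congr rfl (fun b _ => inner b), ← Finset.sum_div, gauss2 (n+1), hD]
  have hne : (Nat.doubleFactorial (n + 3) : ℝ) ≠ 0 := hDpos.ne'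
  field_simp
  push_cast
  ring

end
end

section
/- Fix $r \in \mathbb{R}$ and an integer $p \geq 0$. For $\lambda > 0$ let $\mathcal{M}_{p,0}(\lambda, a) = \frac{1}{\lambda}\sum_{l=0}^{\lfloor p/2\rfloor}(a+1)^{p-2l}(-a)^{l}\frac{(p-l-1)!}{l!\,(p-2l)!}\sum_{j=l+1}^{p}\binom{p}{j}(1-e^{-\lambda})^{j}e^{-\lambda(p-j)}$. Then $\lim_{\lambda\to 0^+} \lambda^{-p/2}\, \mathcal{M}_{p,0}(\lambda, -1+r\sqrt{\lambda}) = \sum_{l=0}^{\lfloor p/2\rfloor}\binom{p}{2l} r^{p-2l} C_l$, where $C_l = \frac{1}{l+1}\binom{2l}{l}$ is the $l$-th Catalan number. -/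
open Filter Real

lemma key1 : Tendsto (fun lam : ℝ => (1 - Real.exp (-lam)) / lam) (nhdsWithin 0 (Set.Ioi 0)) (nhds 1) := by
  have h := (Real.hasDerivAt_exp 0)
  rw [hasDerivAt_iff_tendsto_slope] at h
  have hneg : Tendsto (fun lam : ℝ => -lam) (nhdsWithin 0 (Set.Ioi 0)) (nhdsWithin 0 {(0:ℝ)}ᶜ) := by
    have : Tendsto (fun lam : ℝ => -lam) (nhdsWithin 0 (Set.Ioi 0)) (nhdsWithin 0 (Set.Iio 0)) := by
      simpa using (tendsto_neg_nhdsGT (a := (0:ℝ)))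
    exact this.mono_right (nhdsWithin_mono _ (by intro x hx; simpa using ne_of_lt hx))
  have h2 := h.comp hneg
  simp only [Real.exp_zero] at h2
  refine h2.congr (fun x => ?_)
  simp [slope_def_field, Function.comp]
  ring

lemma coeff_id (p l : ℕ) (h2 : 2 * l ≤ p) (h1 : l + 1 ≤ p) :
    (((p - l - 1).factorial : ℝ) / ((l.factorial : ℝ) * ((p - 2 * l).factorial : ℝ))) *
      (p.choose (l + 1) : ℝ) =
    (p.choose (2 * l) : ℝ) * (((2 * l).choose l : ℝ) / ((l : ℝ) + 1)) := by
  rw [Nat.cast_choose ℝ h1, Nat.cast_choose ℝ h2,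
      Nat.cast_choose ℝ (by omega : l ≤ 2 * l)]
  have e1 : p - (l + 1) = p - l - 1 := by omega
  have e2 : 2 * l - l = l := by omega
  rw [e1, e2, Nat.factorial_succ]
  have h0 : ∀ n : ℕ, ((n.factorial : ℝ)) ≠ 0 := fun n => Nat.cast_ne_zero.2 n.factorial_ne_zero
  have hl1 : ((l : ℝ) + 1) ≠ 0 := by positivity
  field_simp
  push_cast
  ring


/-- Continuum limit of the leading moment coefficient: with `a = -1 + r√λ`,
`lim_{λ→0⁺} λ^{-p/2} M_{p,0}(λ, -1 + r√λ) = ∑_{l=0}^{⌊p/2⌋} \binom{p}{2l} r^{p-2l} C_l`,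
where `C_l = \binom{2l}{l}/(l+1)` is the `l`-th Catalan number, and `M_{p,0}` is given by
the binomial-sum representation. -/
theorem continuum_limit_M_p0 (r : ℝ) (p : ℕ) (hp : 1 ≤ p) :
    Tendsto (fun lam : ℝ =>
        lam ^ (-(p : ℝ) / 2) *
          ((1 / lam) * ∑ l ∈ Finset.range (p / 2 + 1),
            ((-1 + r * Real.sqrt lam) + 1) ^ (p - 2 * l) * (-(-1 + r * Real.sqrt lam)) ^ l *
              (((p - l - 1).factorial : ℝ) /
                ((l.factorial : ℝ) * ((p - 2 * l).factorial : ℝ))) *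
              ∑ j ∈ Finset.Icc (l + 1) p,
                (p.choose j : ℝ) * (1 - Real.exp (-lam)) ^ j * Real.exp (-lam) ^ (p - j)))
      (nhdsWithin 0 (Set.Ioi 0))
      (nhds (∑ l ∈ Finset.range (p / 2 + 1),
        (p.choose (2 * l) : ℝ) * r ^ (p - 2 * l) * (((2 * l).choose l : ℝ) / ((l : ℝ) + 1)))) := by
  set c : ℕ → ℝ := fun l => ((p - l - 1).factorial : ℝ) /
      ((l.factorial : ℝ) * ((p - 2 * l).factorial : ℝ)) with hc
  have hbound : ∀ l ∈ Finset.range (p / 2 + 1), 2 * l ≤ p ∧ l + 1 ≤ p := by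
    intro l hl
    rw [Finset.mem_range] at hl
    constructor <;> omega
  have hF : Tendsto (fun lam : ℝ =>
      ∑ l ∈ Finset.range (p / 2 + 1), ∑ j ∈ Finset.Icc (l + 1) p,
        (r ^ (p - 2 * l) * c l * (p.choose j : ℝ)) *
          ((1 - r * Real.sqrt lam) ^ l * ((1 - Real.exp (-lam)) / lam) ^ (l + 1) *
            (1 - Real.exp (-lam)) ^ (j - (l + 1)) * Real.exp (-lam) ^ (p - j)))
      (nhdsWithin 0 (Set.Ioi 0))
      (nhds (∑ l ∈ Finset.range (p / 2 + 1),
        (p.choose (2 * l) : ℝ) * r ^ (p - 2 * l) * (((2 * l).choose l : ℝ) / ((l : ℝ) + 1)))) := by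
    refine tendsto_finset_sum _ (fun l hl => ?_)
    obtain ⟨h2l, h1l⟩ := hbound l hl
    have hsum : ∑ j ∈ Finset.Icc (l + 1) p,
        ((r ^ (p - 2 * l) * c l * (p.choose j : ℝ)) *
          ((1:ℝ) ^ l * (1:ℝ) ^ (l + 1) * (0:ℝ) ^ (j - (l + 1)) * (1:ℝ) ^ (p - j))) =
        (p.choose (2 * l) : ℝ) * r ^ (p - 2 * l) * (((2 * l).choose l : ℝ) / ((l : ℝ) + 1)) := by
      rw [Finset.sum_eq_single_of_mem (l + 1) (Finset.mem_Icc.2 ⟨le_refl _, h1l⟩)]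
      · simp only [Nat.sub_self, pow_zero, one_pow, mul_one]
        rw [show r ^ (p - 2*l) * c l * (p.choose (l+1) : ℝ)
            = r ^ (p - 2*l) * (c l * (p.choose (l+1) : ℝ)) by ring, hc, coeff_id p l h2l h1l]
        ring
      · intro j hj hne
        have hjl : l + 1 ≤ j := (Finset.mem_Icc.1 hj).1
        have : 0 < j - (l + 1) := by omega
        simp [zero_pow this.ne']
    rw [← hsum]
    refine tendsto_finset_sum _ (fun j hj => ?_)
    refine tendsto_const_nhds.mul ?_
    have t1 : Tendsto (fun lam : ℝ => (1 - r * Real.sqrt lam) ^ l)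
        (nhdsWithin 0 (Set.Ioi 0)) (nhds ((1:ℝ) ^ l)) := by
      have h : ContinuousAt (fun lam : ℝ => (1 - r * Real.sqrt lam) ^ l) 0 := by fun_prop
      simpa using h.tendsto.mono_left (nhdsWithin_le_nhds (s := Set.Ioi (0:ℝ)))
    have t2 : Tendsto (fun lam : ℝ => ((1 - Real.exp (-lam)) / lam) ^ (l + 1))
        (nhdsWithin 0 (Set.Ioi 0)) (nhds ((1:ℝ) ^ (l + 1))) := by
      simpa using key1.pow (l + 1)
    have t3 : Tendsto (fun lam : ℝ => (1 - Real.exp (-lam)) ^ (j - (l + 1)))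
        (nhdsWithin 0 (Set.Ioi 0)) (nhds ((0:ℝ) ^ (j - (l + 1)))) := by
      have h : ContinuousAt (fun lam : ℝ => (1 - Real.exp (-lam)) ^ (j - (l + 1))) 0 := by fun_prop
      have h2 := h.tendsto.mono_left (nhdsWithin_le_nhds (s := Set.Ioi (0:ℝ)))
      simpa using h2
    have t4 : Tendsto (fun lam : ℝ => Real.exp (-lam) ^ (p - j))
        (nhdsWithin 0 (Set.Ioi 0)) (nhds ((1:ℝ) ^ (p - j))) := by
      have h : ContinuousAt (fun lam : ℝ => Real.exp (-lam) ^ (p - j)) 0 := by fun_prop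
      have h2 := h.tendsto.mono_left (nhdsWithin_le_nhds (s := Set.Ioi (0:ℝ)))
      simpa using h2
    exact ((t1.mul t2).mul t3).mul t4
  refine Tendsto.congr' ?_ hF
  filter_upwards [self_mem_nhdsWithin] with lam hlam
  have hlam0 : (0:ℝ) < lam := hlam
  symm
  simp only [Finset.mul_sum]
  refine Finset.sum_congr rfl (fun l hl => ?_)
  obtain ⟨h2l, h1l⟩ := hbound l hl
  have hA : lam ^ (-(p : ℝ) / 2) * (1 / lam) * (Real.sqrt lam) ^ (p - 2 * l)
      = (lam ^ (l + 1))⁻¹ := by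
    rw [Real.sqrt_eq_rpow, ← Real.rpow_natCast (lam ^ ((1:ℝ)/2)) (p - 2 * l),
        ← Real.rpow_mul hlam0.le, one_div, ← Real.rpow_neg_one lam,
        ← Real.rpow_add hlam0, ← Real.rpow_add hlam0]
    have hexp : -(p : ℝ) / 2 + -1 + (1/2) * ((p - 2 * l : ℕ) : ℝ) = -(((l + 1 : ℕ)) : ℝ) := by
      rw [Nat.cast_sub h2l]
      push_cast
      ring
    rw [hexp, Real.rpow_neg hlam0.le, Real.rpow_natCast]
  refine Finset.sum_congr rfl (fun j hj => ?_)
  have hjl : l + 1 ≤ j := (Finset.mem_Icc.1 hj).1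
  have hpow : (1 - Real.exp (-lam)) ^ j
      = (1 - Real.exp (-lam)) ^ (l + 1) * (1 - Real.exp (-lam)) ^ (j - (l + 1)) := by
    rw [← pow_add]
    congr 1
    omega
  set E := 1 - Real.exp (-lam) with hE
  set W := Real.exp (-lam) with hW
  set s := Real.sqrt lam with hs
  calc lam ^ (-(p : ℝ) / 2) *
        (1 / lam * ((-1 + r * s + 1) ^ (p - 2 * l) * (-(-1 + r * s)) ^ l * c l *
          ((p.choose j : ℝ) * E ^ j * W ^ (p - j))))
      = (lam ^ (-(p : ℝ) / 2) * (1 / lam) * s ^ (p - 2 * l)) *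
          (r ^ (p - 2 * l) * (1 - r * s) ^ l * c l * (p.choose j : ℝ) * E ^ j * W ^ (p - j)) := by
        rw [show (-1 + r * s + 1) = r * s by ring, show (-(-1 + r * s)) = 1 - r * s by ring,
          mul_pow r s]
        ring
    _ = (lam ^ (l + 1))⁻¹ *
          (r ^ (p - 2 * l) * (1 - r * s) ^ l * c l * (p.choose j : ℝ) *
            (E ^ (l + 1) * E ^ (j - (l + 1))) * W ^ (p - j)) := by rw [hA, hpow]
    _ = (r ^ (p - 2 * l) * c l * (p.choose j : ℝ)) *
          ((1 - r * s) ^ l * (E / lam) ^ (l + 1) * E ^ (j - (l + 1)) * W ^ (p - j)) := by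
        rw [div_pow, div_eq_mul_inv]
        ring
end
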